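/- arXiv:1608.08554 — 4 statements merged into one kernel-verified Lean document; each statement's English description precedes it below -/
import Mathlib

section
/- Let a, b, c, d ∈ F and ν ∈ ℚ be such that a·d − b·c = ν (as elements of F). Then the 2g×2g real matrix h = P⁻¹ · [[a⋆, b⋆], [c⋆, d⋆]] · P satisfies hᵀ · ψ · h = ν · ψ; moreover if ν ≠ 0 then h is invertible. (This is the key assertion of Proposition 3.4: the morphism ῑ maps G'(A)-points of the group G' = {γ ∈ GL₂(F) : det γ ∈ ℚ} into GSp(2g).) -/
open Matrix

/-- If `a, b, c, d ∈ F` and `ν ∈ ℚ` satisfy `a·d − b·c = ν` in `F`, then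
`h = P⁻¹ · [[a⋆, b⋆], [c⋆, d⋆]] · P` satisfies `hᵀ · ψ · h = ν · ψ`; moreover if `ν ≠ 0`
then `h` is invertible. (Key assertion of Proposition 3.4: `ῑ` maps `G'` into `GSp(2g)`.) -/
theorem stmt_3
    (F : Type*) [Field F] [Algebra ℚ F] [FiniteDimensional ℚ F]
    (g : ℕ) (hg : 1 ≤ g) (hdeg : Module.finrank ℚ F = g)
    (σ : Fin g → (F →+* ℝ)) (hσ : Function.Injective σ)
    (htr : ∀ x : F, (algebraMap ℚ ℝ) (Algebra.trace ℚ F x) = ∑ i, σ i x)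
    (e estar : Fin g → F)
    (he : ∀ x : F, ∃ q : Fin g → ℚ, x = ∑ i, q i • e i)
    (hdual : ∀ j k, Algebra.trace ℚ F (estar j * e k) = if j = k then 1 else 0)
    (R R' : Matrix (Fin g) (Fin g) ℝ)
    (hR : ∀ i j, R i j = σ i (e j))
    (hR' : ∀ i j, R' i j = σ i (estar j))
    (ψ P : Matrix (Fin g ⊕ Fin g) (Fin g ⊕ Fin g) ℝ)
    (hψ : ψ = Matrix.fromBlocks 0 1 (-1) 0)
    (hP : P = Matrix.fromBlocks R' 0 0 R)
    (a b c d : F) (ν : ℚ)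
    (hdet : a * d - b * c = algebraMap ℚ F ν)
    (h : Matrix (Fin g ⊕ Fin g) (Fin g ⊕ Fin g) ℝ)
    (hh : h = P⁻¹ * Matrix.fromBlocks
        (Matrix.diagonal fun i => σ i a) (Matrix.diagonal fun i => σ i b)
        (Matrix.diagonal fun i => σ i c) (Matrix.diagonal fun i => σ i d) * P) :
    hᵀ * ψ * h = (ν : ℝ) • ψ ∧ (ν ≠ 0 → IsUnit h) := by
  -- R'ᵀ * R = 1
  have key : R'ᵀ * R = 1 := by
    ext j k
    have h1 := htr (estar j * e k)
    rw [hdual j k] at h1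
    simp only [Matrix.mul_apply, Matrix.transpose_apply, hR, hR', Matrix.one_apply,
      ] at h1 ⊢
    simp only [_root_.map_mul] at h1
    rw [← h1]
    split_ifs <;> simp
  have key2 : R * R'ᵀ = 1 := mul_eq_one_comm.mp key
  have key3 : R' * Rᵀ = 1 := by
    have := congrArg Matrix.transpose key2
    simpa using this
  have key4 : Rᵀ * R' = 1 := mul_eq_one_comm.mp key3
  set Q : Matrix (Fin g ⊕ Fin g) (Fin g ⊕ Fin g) ℝ := Matrix.fromBlocks Rᵀ 0 0 R'ᵀ with hQ
  have hPQ : P * Q = 1 := by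
    simp [hP, hQ, Matrix.fromBlocks_multiply, key2, key3, ← Matrix.fromBlocks_one]
  have hQP : Q * P = 1 := mul_eq_one_comm.mp hPQ
  have hPinv : P⁻¹ = Q := Matrix.inv_eq_right_inv hPQ
  set A := Matrix.diagonal fun i => σ i a with hA
  set B := Matrix.diagonal fun i => σ i b with hB
  set C := Matrix.diagonal fun i => σ i c with hC
  set D := Matrix.diagonal fun i => σ i d with hD
  set M : Matrix (Fin g ⊕ Fin g) (Fin g ⊕ Fin g) ℝ := Matrix.fromBlocks A B C D with hM
  have hh' : h = Q * M * P := by rw [hh, hPinv]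
  have hnu : ∀ i, σ i a * σ i d - σ i b * σ i c = (ν : ℝ) := by
    intro i
    rw [← _root_.map_mul, ← _root_.map_mul, ← map_sub, hdet]
    exact eq_ratCast ((σ i).comp (algebraMap ℚ F)) ν
  have e1 : Qᵀ * ψ * Q = ψ := by
    rw [hψ, hQ]
    simp [Matrix.fromBlocks_transpose, Matrix.fromBlocks_multiply, key2, key3]
  have hCA : -(C * A) + A * C = 0 := by
    rw [hA, hC]; simp [Matrix.diagonal_mul_diagonal, mul_comm]
  have hDB : -(D * B) + B * D = 0 := by
    rw [hB, hD]; simp [Matrix.diagonal_mul_diagonal, mul_comm]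
  have hADν : -(C * B) + A * D = (ν : ℝ) • 1 := by
    rw [hA, hB, hC, hD, Matrix.diagonal_mul_diagonal, Matrix.diagonal_mul_diagonal,
      Matrix.diagonal_neg, Matrix.diagonal_add, Matrix.smul_one_eq_diagonal]
    refine congrArg Matrix.diagonal (funext fun i => ?_)
    linear_combination hnu i
  have hBCν : -(D * A) + B * C = -((ν : ℝ) • 1) := by
    rw [hA, hB, hC, hD, Matrix.diagonal_mul_diagonal, Matrix.diagonal_mul_diagonal,
      Matrix.diagonal_neg, Matrix.diagonal_add, Matrix.smul_one_eq_diagonal,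
      Matrix.diagonal_neg]
    refine congrArg Matrix.diagonal (funext fun i => ?_)
    linear_combination -hnu i
  have e2 : Mᵀ * ψ * M = (ν : ℝ) • ψ := by
    have hMT : Mᵀ = Matrix.fromBlocks A C B D := by
      rw [hM, Matrix.fromBlocks_transpose, hA, hB, hC, hD]
      simp [Matrix.diagonal_transpose]
    rw [hψ, hM, hMT]
    have : ((ν : ℝ) • Matrix.fromBlocks (0 : Matrix (Fin g) (Fin g) ℝ) 1 (-1) 0 :
        Matrix (Fin g ⊕ Fin g) (Fin g ⊕ Fin g) ℝ)
        = Matrix.fromBlocks 0 ((ν : ℝ) • 1) (-((ν : ℝ) • 1)) 0 := by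
      ext i j
      rcases i with i | i <;> rcases j with j | j <;> simp [Matrix.fromBlocks]
    rw [this]
    simp only [Matrix.fromBlocks_multiply]
    simp only [Matrix.mul_zero, Matrix.zero_mul, Matrix.mul_one, Matrix.mul_neg,
      Matrix.neg_mul, Matrix.one_mul, add_zero, zero_add, Matrix.mul_assoc]
    rw [hCA, hDB, hADν, hBCν]
  have e3 : Pᵀ * ψ * P = ψ := by
    rw [hψ, hP]
    simp [Matrix.fromBlocks_transpose, Matrix.fromBlocks_multiply, key4, key]
  have main : hᵀ * ψ * h = (ν : ℝ) • ψ := by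
    have hform : hᵀ * ψ * h = Pᵀ * (Mᵀ * (Qᵀ * ψ * Q) * M) * P := by
      rw [hh']; simp only [Matrix.transpose_mul]; noncomm_ring
    rw [hform, e1, e2]
    rw [Matrix.mul_smul, Matrix.smul_mul, e3]
  refine ⟨main, fun hν => ?_⟩
  have hnu0 : (ν : ℝ) ≠ 0 := by exact_mod_cast hν
  have hψψ : ψ * (-ψ) = 1 := by
    rw [hψ, Matrix.fromBlocks_neg, Matrix.fromBlocks_multiply, ← Matrix.fromBlocks_one]
    congr 1 <;> simp
  have hψψ' : (-ψ) * ψ = 1 := by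
    have : -(ψ * ψ) = 1 := by rw [← Matrix.mul_neg]; exact hψψ
    rw [Matrix.neg_mul]; exact this
  have hsu : IsUnit ((ν : ℝ) • ψ) := by
    refine ⟨⟨(ν : ℝ) • ψ, (ν : ℝ)⁻¹ • (-ψ), ?_, ?_⟩, rfl⟩
    · rw [smul_mul_smul_comm, hψψ, mul_inv_cancel₀ hnu0, one_smul]
    · rw [smul_mul_smul_comm, hψψ', inv_mul_cancel₀ hnu0, one_smul]
  have hu : IsUnit (hᵀ * ψ * h) := main ▸ hsu
  rw [Matrix.isUnit_iff_isUnit_det, Matrix.det_mul, Matrix.det_mul] at hu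
  rw [Matrix.isUnit_iff_isUnit_det]
  exact isUnit_of_mul_isUnit_right hu
end

section
/- Let a, b, c, d ∈ F with a·d − b·c = ν for some nonzero ν ∈ ℚ, and let τ = (τ₁, …, τ_g) ∈ ℂ^g be such that σᵢ(c)·τᵢ + σᵢ(d) ≠ 0 for every i. Write the 2g×2g matrix h = P⁻¹ · [[a⋆, b⋆], [c⋆, d⋆]] · P in g×g block form h = [[A, B], [C, D]]. Then the complex matrix C·ι(τ) + D is invertible and (A·ι(τ) + B)·(C·ι(τ) + D)⁻¹ = ι(τ'), where τ' ∈ ℂ^g is given componentwise by τ'ᵢ = (σᵢ(a)·τᵢ + σᵢ(b)) / (σᵢ(c)·τᵢ + σᵢ(d)). (This is the equivariance of the pair (ῑ, ι) asserted in Proposition 3.4.) -/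
open Matrix

/-- Let `a, b, c, d ∈ F` with `a·d − b·c = ν` for some nonzero `ν ∈ ℚ`, and let
`τ ∈ ℂ^g` be such that `σᵢ(c)·τᵢ + σᵢ(d) ≠ 0` for every `i`. Writing
`h = P⁻¹ · [[a⋆, b⋆], [c⋆, d⋆]] · P` in `g × g` block form `h = [[A, B], [C, D]]`, the
complex matrix `C·ι(τ) + D` is invertible and
`(A·ι(τ) + B)·(C·ι(τ) + D)⁻¹ = ι(τ')`, where `τ'ᵢ = (σᵢ(a)·τᵢ + σᵢ(b)) / (σᵢ(c)·τᵢ + σᵢ(d))`.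
(Equivariance of the pair `(ῑ, ι)` asserted in Proposition 3.4.) -/
theorem stmt_6
    (F : Type*) [Field F] [Algebra ℚ F] [FiniteDimensional ℚ F]
    (g : ℕ) (hg : 1 ≤ g) (hdeg : Module.finrank ℚ F = g)
    (σ : Fin g → (F →+* ℝ)) (hσ : Function.Injective σ)
    (htr : ∀ x : F, (algebraMap ℚ ℝ) (Algebra.trace ℚ F x) = ∑ i, σ i x)
    (e estar : Fin g → F)
    (he : ∀ x : F, ∃ q : Fin g → ℚ, x = ∑ i, q i • e i)
    (hdual : ∀ j k, Algebra.trace ℚ F (estar j * e k) = if j = k then 1 else 0)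
    (R R' : Matrix (Fin g) (Fin g) ℝ)
    (hR : ∀ i j, R i j = σ i (e j))
    (hR' : ∀ i j, R' i j = σ i (estar j))
    (P : Matrix (Fin g ⊕ Fin g) (Fin g ⊕ Fin g) ℝ)
    (hP : P = Matrix.fromBlocks R' 0 0 R)
    (a b c d : F) (ν : ℚ) (hν : ν ≠ 0)
    (hdet : a * d - b * c = algebraMap ℚ F ν)
    (τ : Fin g → ℂ)
    (hτ : ∀ i, (σ i c : ℂ) * τ i + (σ i d : ℂ) ≠ 0)
    (τ' : Fin g → ℂ)
    (hτ' : ∀ i, τ' i = ((σ i a : ℂ) * τ i + (σ i b : ℂ)) / ((σ i c : ℂ) * τ i + (σ i d : ℂ)))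
    (h : Matrix (Fin g ⊕ Fin g) (Fin g ⊕ Fin g) ℝ)
    (hh : h = P⁻¹ * Matrix.fromBlocks
        (Matrix.diagonal fun i => σ i a) (Matrix.diagonal fun i => σ i b)
        (Matrix.diagonal fun i => σ i c) (Matrix.diagonal fun i => σ i d) * P)
    (A B C D : Matrix (Fin g) (Fin g) ℂ)
    (hA : A = (h.toBlocks₁₁).map (Complex.ofReal ·))
    (hB : B = (h.toBlocks₁₂).map (Complex.ofReal ·))
    (hC : C = (h.toBlocks₂₁).map (Complex.ofReal ·))
    (hD : D = (h.toBlocks₂₂).map (Complex.ofReal ·))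
    (ιτ ιτ' : Matrix (Fin g) (Fin g) ℂ)
    (hιτ : ιτ = (R.map (Complex.ofReal ·))ᵀ * Matrix.diagonal τ * R.map (Complex.ofReal ·))
    (hιτ' : ιτ' = (R.map (Complex.ofReal ·))ᵀ * Matrix.diagonal τ' * R.map (Complex.ofReal ·)) :
    IsUnit (C * ιτ + D) ∧ (A * ιτ + B) * (C * ιτ + D)⁻¹ = ιτ' := by

  -- Real matrix identities coming from trace duality
  have hR'R : R'ᵀ * R = 1 := by
    ext j k
    simp only [Matrix.mul_apply, Matrix.transpose_apply, hR, hR', Matrix.one_apply]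
    have hs : ∀ i ∈ Finset.univ, σ i (estar j) * σ i (e k) = σ i (estar j * e k) :=
      fun i _ => (map_mul _ _ _).symm
    rw [Finset.sum_congr rfl hs, ← htr, hdual]
    split_ifs <;> simp
  have hRR' : R * R'ᵀ = 1 := mul_eq_one_comm.mp hR'R
  have hR'Rt : R' * Rᵀ = 1 := by
    have := congrArg Matrix.transpose hRR'
    simpa using this
  have hRtR' : Rᵀ * R' = 1 := by
    have := congrArg Matrix.transpose hR'R
    simpa using this
  -- explicit inverse of P
  set Q : Matrix (Fin g ⊕ Fin g) (Fin g ⊕ Fin g) ℝ := Matrix.fromBlocks Rᵀ 0 0 R'ᵀ with hQ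
  have hPQ : P * Q = 1 := by
    rw [hP, hQ, Matrix.fromBlocks_multiply]
    simp [hR'Rt, hRR', ← Matrix.fromBlocks_one]
  have hPinv : P⁻¹ = Q := Matrix.inv_eq_right_inv hPQ
  -- blocks of h
  have hhblocks : h = Matrix.fromBlocks
      (Rᵀ * Matrix.diagonal (fun i => σ i a) * R') (Rᵀ * Matrix.diagonal (fun i => σ i b) * R)
      (R'ᵀ * Matrix.diagonal (fun i => σ i c) * R') (R'ᵀ * Matrix.diagonal (fun i => σ i d) * R) := by
    rw [hh, hPinv, hQ, hP, Matrix.fromBlocks_multiply, Matrix.fromBlocks_multiply]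
    simp
  -- complexification
  set S : Matrix (Fin g) (Fin g) ℂ := R.map (Complex.ofReal ·) with hS
  set S' : Matrix (Fin g) (Fin g) ℂ := R'.map (Complex.ofReal ·) with hS'
  have cmul : ∀ X Y : Matrix (Fin g) (Fin g) ℝ,
      (X * Y).map (Complex.ofReal ·) = X.map (Complex.ofReal ·) * Y.map (Complex.ofReal ·) :=
    fun X Y => Matrix.map_mul (f := Complex.ofRealHom)
  have ctrans : ∀ X : Matrix (Fin g) (Fin g) ℝ,
      Xᵀ.map (Complex.ofReal ·) = (X.map (Complex.ofReal ·))ᵀ :=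
    fun X => Matrix.transpose_map
  have cone : (1 : Matrix (Fin g) (Fin g) ℝ).map (Complex.ofReal ·) = 1 :=
    Matrix.map_one _ (map_zero Complex.ofRealHom) (map_one Complex.ofRealHom)
  have cdiag : ∀ v : Fin g → ℝ, (Matrix.diagonal v).map (Complex.ofReal ·)
      = Matrix.diagonal (fun i => (v i : ℂ)) :=
    fun v => Matrix.diagonal_map (map_zero Complex.ofRealHom)
  have c1 : S'ᵀ * S = 1 := by rw [hS, hS', ← ctrans, ← cmul, hR'R, cone]
  have c2 : S * S'ᵀ = 1 := by rw [hS, hS', ← ctrans, ← cmul, hRR', cone]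
  have c3 : Sᵀ * S' = 1 := by rw [hS, hS', ← ctrans, ← cmul, hRtR', cone]
  have c4 : S' * Sᵀ = 1 := by rw [hS, hS', ← ctrans, ← cmul, hR'Rt, cone]
  -- complexified blocks
  have hA' : A = Sᵀ * Matrix.diagonal (fun i => (σ i a : ℂ)) * S' := by
    rw [hA, hhblocks]
    simp only [Matrix.toBlocks_fromBlocks₁₁]
    rw [cmul, cmul, ctrans, cdiag]
  have hB' : B = Sᵀ * Matrix.diagonal (fun i => (σ i b : ℂ)) * S := by
    rw [hB, hhblocks]
    simp only [Matrix.toBlocks_fromBlocks₁₂]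
    rw [cmul, cmul, ctrans, cdiag]
  have hC' : C = S'ᵀ * Matrix.diagonal (fun i => (σ i c : ℂ)) * S' := by
    rw [hC, hhblocks]
    simp only [Matrix.toBlocks_fromBlocks₂₁]
    rw [cmul, cmul, ctrans, cdiag]
  have hD' : D = S'ᵀ * Matrix.diagonal (fun i => (σ i d : ℂ)) * S := by
    rw [hD, hhblocks]
    simp only [Matrix.toBlocks_fromBlocks₂₂]
    rw [cmul, cmul, ctrans, cdiag]
  -- helper
  have hcol : ∀ X : Matrix (Fin g) (Fin g) ℂ, S' * (Sᵀ * X) = X := fun X => by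
    rw [← Matrix.mul_assoc, c4, Matrix.one_mul]
  set D1 : Matrix (Fin g) (Fin g) ℂ :=
    Matrix.diagonal (fun i => (σ i c : ℂ) * τ i + (σ i d : ℂ)) with hD1
  set D2 : Matrix (Fin g) (Fin g) ℂ :=
    Matrix.diagonal (fun i => (σ i a : ℂ) * τ i + (σ i b : ℂ)) with hD2
  have hsplit1 : D1 = Matrix.diagonal (fun i => (σ i c : ℂ)) * Matrix.diagonal τ
      + Matrix.diagonal (fun i => (σ i d : ℂ)) := by
    rw [hD1, Matrix.diagonal_mul_diagonal, Matrix.diagonal_add]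
  have hsplit2 : D2 = Matrix.diagonal (fun i => (σ i a : ℂ)) * Matrix.diagonal τ
      + Matrix.diagonal (fun i => (σ i b : ℂ)) := by
    rw [hD2, Matrix.diagonal_mul_diagonal, Matrix.diagonal_add]
  have key1 : C * ιτ + D = S'ᵀ * D1 * S := by
    rw [hC', hD', hιτ, hsplit1]
    simp only [Matrix.mul_assoc, hcol]
    simp only [Matrix.add_mul, Matrix.mul_add, Matrix.mul_assoc]
  have key2 : A * ιτ + B = Sᵀ * D2 * S := by
    rw [hA', hB', hιτ, hsplit2]
    simp only [Matrix.mul_assoc, hcol]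
    simp only [Matrix.add_mul, Matrix.mul_add, Matrix.mul_assoc]
  set E1 : Matrix (Fin g) (Fin g) ℂ :=
    Matrix.diagonal (fun i => ((σ i c : ℂ) * τ i + (σ i d : ℂ))⁻¹) with hE1
  have hD1E1 : D1 * E1 = 1 := by
    rw [hD1, hE1, Matrix.diagonal_mul_diagonal]
    rw [show (fun i => ((σ i c : ℂ) * τ i + σ i d) * ((σ i c : ℂ) * τ i + σ i d)⁻¹)
        = fun _ => (1 : ℂ) from funext fun i => mul_inv_cancel₀ (hτ i), Matrix.diagonal_one]
  have hE1D1 : E1 * D1 = 1 := by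
    rw [hD1, hE1, Matrix.diagonal_mul_diagonal]
    rw [show (fun i => ((σ i c : ℂ) * τ i + σ i d)⁻¹ * ((σ i c : ℂ) * τ i + σ i d))
        = fun _ => (1 : ℂ) from funext fun i => inv_mul_cancel₀ (hτ i), Matrix.diagonal_one]
  set E : Matrix (Fin g) (Fin g) ℂ := S'ᵀ * E1 * S with hE
  have hright : (C * ιτ + D) * E = 1 := by
    rw [key1, hE]
    calc S'ᵀ * D1 * S * (S'ᵀ * E1 * S)
        = S'ᵀ * (D1 * ((S * S'ᵀ) * (E1 * S))) := by simp only [Matrix.mul_assoc]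
      _ = S'ᵀ * (D1 * (E1 * S)) := by rw [c2, Matrix.one_mul]
      _ = S'ᵀ * S := by rw [← Matrix.mul_assoc D1, hD1E1, Matrix.one_mul]
      _ = 1 := c1
  have hleft : E * (C * ιτ + D) = 1 := by
    rw [key1, hE]
    calc S'ᵀ * E1 * S * (S'ᵀ * D1 * S)
        = S'ᵀ * (E1 * ((S * S'ᵀ) * (D1 * S))) := by simp only [Matrix.mul_assoc]
      _ = S'ᵀ * (E1 * (D1 * S)) := by rw [c2, Matrix.one_mul]
      _ = S'ᵀ * S := by rw [← Matrix.mul_assoc E1, hE1D1, Matrix.one_mul]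
      _ = 1 := c1
  refine ⟨⟨⟨C * ιτ + D, E, hright, hleft⟩, rfl⟩, ?_⟩
  rw [Matrix.inv_eq_right_inv hright, key2, hE]
  calc Sᵀ * D2 * S * (S'ᵀ * E1 * S)
      = Sᵀ * (D2 * ((S * S'ᵀ) * (E1 * S))) := by simp only [Matrix.mul_assoc]
    _ = Sᵀ * (D2 * E1 * S) := by rw [c2, Matrix.one_mul, Matrix.mul_assoc]
    _ = Sᵀ * (Matrix.diagonal τ' * S) := by
        have hD2E1 : D2 * E1 = Matrix.diagonal τ' := by
          rw [hD2, hE1, Matrix.diagonal_mul_diagonal,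
            show (fun i => ((σ i a : ℂ) * τ i + (σ i b : ℂ)) * ((σ i c : ℂ) * τ i + (σ i d : ℂ))⁻¹) = τ'
              from funext fun i => by rw [hτ' i, div_eq_mul_inv]]
        rw [hD2E1]
    _ = ιτ' := by rw [hιτ', Matrix.mul_assoc]
end

section
/- Let a, b, c, d ∈ F satisfy a·d − b·c = 1, a ∈ 𝒪_F, d ∈ 𝒪_F, b ∈ 𝒟⁻¹, and c·𝒟⁻¹ ⊆ 𝒪_F (i.e. c lies in the different ideal 𝒟). Then there exists an integer matrix N ∈ M_{2g}(ℤ) such that Nᵀ · ψ · N = ψ (so N ∈ Sp(2g, ℤ)) and such that the image of N in M_{2g}(ℝ) equals P⁻¹ · [[a⋆, b⋆], [c⋆, d⋆]] · P. (This is the assertion that ῑ maps SL(𝒟⁻¹ ⊕ 𝒪_F) into Sp(2g, ℤ).) -/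
open Matrix

/-- Let `a, b, c, d ∈ F` satisfy `a·d − b·c = 1`, with `a, d ∈ 𝒪_F`,
`b ∈ 𝒟⁻¹` and `c·𝒟⁻¹ ⊆ 𝒪_F` (i.e. `c ∈ 𝒟`). Then there exists an integer matrix
`N ∈ M_{2g}(ℤ)` with `Nᵀ · ψ · N = ψ` (so `N ∈ Sp(2g, ℤ)`) whose image in `M_{2g}(ℝ)`
equals `P⁻¹ · [[a⋆, b⋆], [c⋆, d⋆]] · P`. (`ῑ` maps `SL(𝒟⁻¹ ⊕ 𝒪_F)` into `Sp(2g, ℤ)`.) -/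
theorem stmt_8
    (F : Type*) [Field F] [Algebra ℚ F] [FiniteDimensional ℚ F]
    (g : ℕ) (hg : 1 ≤ g) (hdeg : Module.finrank ℚ F = g)
    (σ : Fin g → (F →+* ℝ)) (hσ : Function.Injective σ)
    (htr : ∀ x : F, (algebraMap ℚ ℝ) (Algebra.trace ℚ F x) = ∑ i, σ i x)
    (e estar : Fin g → F)
    (hdual : ∀ j k, Algebra.trace ℚ F (estar j * e k) = if j = k then 1 else 0)
    (hint : ∀ i, IsIntegral ℤ (e i))
    (hspan : ∀ y : F, IsIntegral ℤ y → ∃ m : Fin g → ℤ, y = ∑ i, m i • e i)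
    (R R' : Matrix (Fin g) (Fin g) ℝ)
    (hR : ∀ i j, R i j = σ i (e j))
    (hR' : ∀ i j, R' i j = σ i (estar j))
    (ψ P : Matrix (Fin g ⊕ Fin g) (Fin g ⊕ Fin g) ℝ)
    (hψ : ψ = Matrix.fromBlocks 0 1 (-1) 0)
    (hP : P = Matrix.fromBlocks R' 0 0 R)
    (ψℤ : Matrix (Fin g ⊕ Fin g) (Fin g ⊕ Fin g) ℤ)
    (hψℤ : ψℤ = Matrix.fromBlocks 0 1 (-1) 0)
    (a b c d : F)
    (hdet : a * d - b * c = 1)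
    (ha : IsIntegral ℤ a) (hd : IsIntegral ℤ d)
    (hb : ∀ y : F, IsIntegral ℤ y → ∃ n : ℤ, Algebra.trace ℚ F (b * y) = n)
    (hc : ∀ x : F, (∀ y : F, IsIntegral ℤ y → ∃ n : ℤ, Algebra.trace ℚ F (x * y) = n) →
      IsIntegral ℤ (c * x)) :
    ∃ N : Matrix (Fin g ⊕ Fin g) (Fin g ⊕ Fin g) ℤ,
      Nᵀ * ψℤ * N = ψℤ ∧
      N.map (Int.cast : ℤ → ℝ) = P⁻¹ * Matrix.fromBlocks
        (Matrix.diagonal fun i => σ i a) (Matrix.diagonal fun i => σ i b)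
        (Matrix.diagonal fun i => σ i c) (Matrix.diagonal fun i => σ i d) * P := by
  classical
  subst hψ hP hψℤ
  set M : Matrix (Fin g ⊕ Fin g) (Fin g ⊕ Fin g) ℝ := Matrix.fromBlocks
        (Matrix.diagonal fun i => σ i a) (Matrix.diagonal fun i => σ i b)
        (Matrix.diagonal fun i => σ i c) (Matrix.diagonal fun i => σ i d) with hM
  set P : Matrix (Fin g ⊕ Fin g) (Fin g ⊕ Fin g) ℝ := Matrix.fromBlocks R' 0 0 R with hP
  set ψ : Matrix (Fin g ⊕ Fin g) (Fin g ⊕ Fin g) ℝ := Matrix.fromBlocks 0 1 (-1) 0 with hψ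
  set ψI : Matrix (Fin g ⊕ Fin g) (Fin g ⊕ Fin g) ℤ := Matrix.fromBlocks 0 1 (-1) 0 with hψI
  -- estar k is in the inverse different
  have hestar : ∀ k (y : F), IsIntegral ℤ y →
      ∃ n : ℤ, Algebra.trace ℚ F (estar k * y) = n := by
    intro k y hy
    obtain ⟨m, rfl⟩ := hspan y hy
    refine ⟨m k, ?_⟩
    rw [Finset.mul_sum]
    have h1 : ∀ i, Algebra.trace ℚ F (estar k * m i • e i)
        = if k = i then (m i : ℚ) else 0 := by
      intro i
      rw [mul_smul_comm, map_zsmul, hdual]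
      by_cases h : k = i <;> simp [h]
    rw [map_sum, Finset.sum_congr rfl fun i _ => h1 i, Finset.sum_ite_eq]
    simp
  -- R^T R' = 1
  have hT : Rᵀ * R' = 1 := by
    ext j k
    rw [Matrix.mul_apply]
    have h1 : ∀ i, Rᵀ j i * R' i k = σ i (estar k * e j) := by
      intro i
      rw [Matrix.transpose_apply, hR, hR', _root_.map_mul]; ring
    rw [Finset.sum_congr rfl fun i _ => h1 i, ← htr, hdual]
    by_cases h : j = k
    · subst h; simp [Matrix.one_apply]
    · rw [if_neg (fun hh => h hh.symm)]
      simp [Matrix.one_apply, h]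
  have hT' : R' * Rᵀ = 1 := mul_eq_one_comm.mp hT
  have hRR' : R * R'ᵀ = 1 := by
    have := congrArg Matrix.transpose hT'
    simpa using this
  have hR'R : R'ᵀ * R = 1 := by
    have := congrArg Matrix.transpose hT
    simpa using this
  set Q : Matrix (Fin g ⊕ Fin g) (Fin g ⊕ Fin g) ℝ := Matrix.fromBlocks Rᵀ 0 0 R'ᵀ with hQ
  have hPQ : P * Q = 1 := by
    rw [hP, hQ, Matrix.fromBlocks_multiply]
    simp [hT', hRR', Matrix.fromBlocks_one]
  have hPinv : P⁻¹ = Q := Matrix.inv_eq_right_inv hPQ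
  -- entries of blocks
  have entry : ∀ (x : F) (u v : Fin g → F) (U V : Matrix (Fin g) (Fin g) ℝ),
      (∀ i j, U i j = σ i (u j)) → (∀ i j, V i j = σ i (v j)) → ∀ j k,
      (Uᵀ * Matrix.diagonal (fun i => σ i x) * V) j k
        = algebraMap ℚ ℝ (Algebra.trace ℚ F (x * u j * v k)) := by
    intro x u v U V hU hV j k
    rw [htr, Matrix.mul_apply]
    have h1 : ∀ i, (Uᵀ * Matrix.diagonal (fun i => σ i x)) j i * V i k
        = σ i (x * u j * v k) := by
      intro i
      rw [Matrix.mul_diagonal, Matrix.transpose_apply, hU, hV,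
        _root_.map_mul, _root_.map_mul]
      ring
    exact Finset.sum_congr rfl fun i _ => h1 i
  -- block form of P⁻¹ M P
  have hE : P⁻¹ * M * P = Matrix.fromBlocks
      (Rᵀ * Matrix.diagonal (fun i => σ i a) * R') (Rᵀ * Matrix.diagonal (fun i => σ i b) * R)
      (R'ᵀ * Matrix.diagonal (fun i => σ i c) * R') (R'ᵀ * Matrix.diagonal (fun i => σ i d) * R) := by
    rw [hPinv, hQ, hM, hP, Matrix.fromBlocks_multiply, Matrix.fromBlocks_multiply]
    simp [Matrix.mul_assoc]
  -- integrality of all entries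
  have hEnt : ∀ i j, ∃ n : ℤ, (P⁻¹ * M * P) i j = (n : ℝ) := by
    intro i j
    rw [hE]
    rcases i with j' | j' <;> rcases j with k | k
    · obtain ⟨n, hn⟩ := hestar k (a * e j') (IsIntegral.mul ha (hint j'))
      refine ⟨n, ?_⟩
      rw [Matrix.fromBlocks_apply₁₁, entry a e estar R R' hR hR',
        show a * e j' * estar k = estar k * (a * e j') by ring, hn]
      simp
    · obtain ⟨n, hn⟩ := hb (e j' * e k) (IsIntegral.mul (hint j') (hint k))
      refine ⟨n, ?_⟩
      rw [Matrix.fromBlocks_apply₁₂, entry b e e R R hR hR,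
        show b * e j' * e k = b * (e j' * e k) by ring, hn]
      simp
    · obtain ⟨n, hn⟩ := hestar k (c * estar j') (hc (estar j') (hestar j'))
      refine ⟨n, ?_⟩
      rw [Matrix.fromBlocks_apply₂₁, entry c estar estar R' R' hR' hR',
        show c * estar j' * estar k = estar k * (c * estar j') by ring, hn]
      simp
    · obtain ⟨n, hn⟩ := hestar j' (d * e k) (IsIntegral.mul hd (hint k))
      refine ⟨n, ?_⟩
      rw [Matrix.fromBlocks_apply₂₂, entry d estar e R' R hR' hR,
        show d * estar j' * e k = estar j' * (d * e k) by ring, hn]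
      simp
  choose N0 hN using hEnt
  set N : Matrix (Fin g ⊕ Fin g) (Fin g ⊕ Fin g) ℤ := Matrix.of N0 with hNdef
  have hNmap : N.map (Int.cast : ℤ → ℝ) = P⁻¹ * M * P := by
    ext i j
    rw [Matrix.map_apply]
    exact (hN i j).symm
  refine ⟨N, ?_, hNmap⟩
  -- symplectic condition over ℝ
  have comp : ∀ X Y : Matrix (Fin g ⊕ Fin g) (Fin g ⊕ Fin g) ℝ,
      Xᵀ * ψ * X = ψ → Yᵀ * ψ * Y = ψ → (X * Y)ᵀ * ψ * (X * Y) = ψ := by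
    intro X Y hX hY
    calc (X * Y)ᵀ * ψ * (X * Y) = Yᵀ * (Xᵀ * ψ * X) * Y := by
          rw [Matrix.transpose_mul]; simp only [Matrix.mul_assoc]
      _ = ψ := by rw [hX, hY]
  have hdet' : ∀ i, σ i a * σ i d - σ i c * σ i b = 1 := by
    intro i
    have h2 := congrArg (σ i) hdet
    rw [_root_.map_sub, _root_.map_mul, _root_.map_mul, _root_.map_one] at h2
    rw [← h2]; ring
  have hMψ : Mᵀ * ψ * M = ψ := by
    rw [hM, hψ, Matrix.fromBlocks_transpose, Matrix.fromBlocks_multiply,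
      Matrix.fromBlocks_multiply]
    simp only [Matrix.diagonal_transpose, Matrix.mul_zero, Matrix.zero_mul, Matrix.mul_one,
      Matrix.one_mul, Matrix.mul_neg, Matrix.neg_mul, zero_add, add_zero,
      Matrix.diagonal_mul_diagonal]
    rw [Matrix.fromBlocks_inj]
    refine ⟨?_, ?_, ?_, ?_⟩
    · ext i j
      by_cases h : i = j <;> simp [Matrix.diagonal, h, mul_comm]
    · ext i j
      by_cases h : i = j
      · subst h; simp [Matrix.diagonal, Matrix.one_apply, ← hdet' i]; ring
      · simp [Matrix.diagonal, Matrix.one_apply, h]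
    · ext i j
      by_cases h : i = j
      · subst h; simp [Matrix.diagonal, Matrix.one_apply, ← hdet' i]; ring
      · simp [Matrix.diagonal, Matrix.one_apply, h]
    · ext i j
      by_cases h : i = j <;> simp [Matrix.diagonal, h, mul_comm]
  have hPψ : Pᵀ * ψ * P = ψ := by
    rw [hP, hψ, Matrix.fromBlocks_transpose, Matrix.fromBlocks_multiply,
      Matrix.fromBlocks_multiply]
    simp [hT, hR'R]
  have hQψ : Qᵀ * ψ * Q = ψ := by
    rw [hQ, hψ, Matrix.fromBlocks_transpose, Matrix.fromBlocks_multiply,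
      Matrix.fromBlocks_multiply]
    simp [hT', hRR']
  have hEψ : (P⁻¹ * M * P)ᵀ * ψ * (P⁻¹ * M * P) = ψ := by
    rw [hPinv, Matrix.mul_assoc Q M P]
    exact comp Q (M * P) hQψ (comp M P hMψ hPψ)
  -- transfer to ℤ
  apply Matrix.map_injective (f := (Int.cast : ℤ → ℝ)) Int.cast_injective
  show (Nᵀ * ψI * N).map ⇑(Int.castRingHom ℝ) = ψI.map ⇑(Int.castRingHom ℝ)
  have hψImap : ψI.map ⇑(Int.castRingHom ℝ) = ψ := by
    ext i j
    rcases i with i | i <;> rcases j with j | j <;>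
      simp [hψI, hψ, Matrix.one_apply, apply_ite (Int.cast : ℤ → ℝ)]
  rw [Matrix.map_mul, Matrix.map_mul, Matrix.transpose_map, hψImap]
  show ((N.map (Int.cast : ℤ → ℝ))ᵀ) * ψ * (N.map (Int.cast : ℤ → ℝ)) = ψ
  rw [hNmap]
  exact hEψ
end

section
/- Let n ≥ 1 be an integer and let a, b, c, d ∈ F satisfy a·d − b·c = 1, a − 1 ∈ n·𝒪_F, d − 1 ∈ n·𝒪_F, b ∈ n·𝒟⁻¹, and c = n·c₀ for some c₀ ∈ F with c₀·𝒟⁻¹ ⊆ 𝒪_F (i.e. c ∈ n·𝒟). Then every entry of the 2g×2g real matrix P⁻¹ · [[a⋆, b⋆], [c⋆, d⋆]] · P − I_{2g} lies in n·ℤ; that is, the corresponding integer symplectic matrix is congruent to the identity modulo n. (This is the assertion that ῑ maps the principal congruence subgroup Γ'(n) ⊆ SL(2, F) into the principal congruence subgroup Γ(n) ⊆ Sp(2g, ℤ).) -/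
open Matrix

/-- Let `n ≥ 1` and let `a, b, c, d ∈ F` satisfy `a·d − b·c = 1`,
`a − 1 ∈ n·𝒪_F`, `d − 1 ∈ n·𝒪_F`, `b ∈ n·𝒟⁻¹` and `c ∈ n·𝒟`. Then every entry of
`P⁻¹ · [[a⋆, b⋆], [c⋆, d⋆]] · P − 1` lies in `n·ℤ`; that is, the corresponding integer
symplectic matrix is congruent to the identity modulo `n`. (`ῑ` maps the principal
congruence subgroup `Γ'(n) ⊆ SL(2, F)` into `Γ(n) ⊆ Sp(2g, ℤ)`.) -/
theorem stmt_9
    (F : Type*) [Field F] [Algebra ℚ F] [FiniteDimensional ℚ F]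
    (g : ℕ) (hg : 1 ≤ g) (hdeg : Module.finrank ℚ F = g)
    (σ : Fin g → (F →+* ℝ)) (hσ : Function.Injective σ)
    (htr : ∀ x : F, (algebraMap ℚ ℝ) (Algebra.trace ℚ F x) = ∑ i, σ i x)
    (e estar : Fin g → F)
    (hdual : ∀ j k, Algebra.trace ℚ F (estar j * e k) = if j = k then 1 else 0)
    (hint : ∀ i, IsIntegral ℤ (e i))
    (hspan : ∀ y : F, IsIntegral ℤ y → ∃ m : Fin g → ℤ, y = ∑ i, m i • e i)
    (R R' : Matrix (Fin g) (Fin g) ℝ)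
    (hR : ∀ i j, R i j = σ i (e j))
    (hR' : ∀ i j, R' i j = σ i (estar j))
    (P : Matrix (Fin g ⊕ Fin g) (Fin g ⊕ Fin g) ℝ)
    (hP : P = Matrix.fromBlocks R' 0 0 R)
    (n : ℕ) (hn : 1 ≤ n)
    (a b c d : F)
    (hdet : a * d - b * c = 1)
    (ha : ∃ a₀ : F, IsIntegral ℤ a₀ ∧ a - 1 = (n : F) * a₀)
    (hd : ∃ d₀ : F, IsIntegral ℤ d₀ ∧ d - 1 = (n : F) * d₀)
    (hb : ∃ b₀ : F,
      (∀ y : F, IsIntegral ℤ y → ∃ m : ℤ, Algebra.trace ℚ F (b₀ * y) = m) ∧ b = (n : F) * b₀)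
    (hc : ∃ c₀ : F,
      (∀ x : F, (∀ y : F, IsIntegral ℤ y → ∃ m : ℤ, Algebra.trace ℚ F (x * y) = m) →
        IsIntegral ℤ (c₀ * x)) ∧ c = (n : F) * c₀) :
    ∀ i j, ∃ m : ℤ,
      (P⁻¹ * Matrix.fromBlocks
        (Matrix.diagonal fun i => σ i a) (Matrix.diagonal fun i => σ i b)
        (Matrix.diagonal fun i => σ i c) (Matrix.diagonal fun i => σ i d) * P - 1) i j
      = (n : ℝ) * m := by
  obtain ⟨a₀, ha₀, haeq⟩ := ha
  obtain ⟨d₀, hd₀, hdeq⟩ := hd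
  obtain ⟨b₀, hb₀, hbeq⟩ := hb
  obtain ⟨c₀, hc₀, hceq⟩ := hc
  -- trace of (integral element) * estar k is an integer
  have trZ : ∀ x : F, IsIntegral ℤ x → ∀ k, ∃ m : ℤ,
      Algebra.trace ℚ F (x * estar k) = m := by
    intro x hx k
    obtain ⟨m, hm⟩ := hspan x hx
    refine ⟨m k, ?_⟩
    rw [hm, Finset.sum_mul, map_sum]
    have h1 : ∀ i, Algebra.trace ℚ F ((m i • e i) * estar k)
        = (m i : ℚ) * (if k = i then 1 else 0) := by
      intro i
      rw [smul_mul_assoc, map_zsmul, mul_comm, hdual k i]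
      simp
    simp_rw [h1]
    simp
  have hRtR' : Rᵀ * R' = 1 := by
    ext j k
    rw [Matrix.mul_apply]
    simp_rw [Matrix.transpose_apply, hR, hR']
    have h1 : ∀ i, σ i (e j) * σ i (estar k) = σ i (estar k * e j) := by
      intro i; rw [_root_.map_mul]; ring
    simp_rw [h1]
    rw [← htr, hdual k j]
    by_cases h : j = k
    · simp [h, Matrix.one_apply]
    · simp [h, Ne.symm h, Matrix.one_apply]
  have hR'Rt : R' * Rᵀ = 1 := mul_eq_one_comm.mp hRtR'
  have hRR't : R * R'ᵀ = 1 := by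
    have h2 := congrArg Matrix.transpose hR'Rt
    simpa [Matrix.transpose_mul] using h2
  have hPinv : P⁻¹ = Matrix.fromBlocks Rᵀ 0 0 R'ᵀ := by
    apply Matrix.inv_eq_right_inv
    rw [hP, Matrix.fromBlocks_multiply]
    simp [hR'Rt, hRR't]
  have hprod : P⁻¹ * Matrix.fromBlocks
        (Matrix.diagonal fun i => σ i a) (Matrix.diagonal fun i => σ i b)
        (Matrix.diagonal fun i => σ i c) (Matrix.diagonal fun i => σ i d) * P
      = Matrix.fromBlocks
        (Rᵀ * (Matrix.diagonal fun i => σ i a) * R')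
        (Rᵀ * (Matrix.diagonal fun i => σ i b) * R)
        (R'ᵀ * (Matrix.diagonal fun i => σ i c) * R')
        (R'ᵀ * (Matrix.diagonal fun i => σ i d) * R) := by
    rw [hPinv, hP, Matrix.fromBlocks_multiply, Matrix.fromBlocks_multiply]
    simp [Matrix.mul_assoc]
  have entry : ∀ (A B : Matrix (Fin g) (Fin g) ℝ) (f : Fin g → ℝ) (j k : Fin g),
      (Aᵀ * Matrix.diagonal f * B) j k = ∑ i, A i j * f i * B i k := by
    intro A B f j k
    rw [Matrix.mul_apply]
    simp_rw [Matrix.mul_diagonal, Matrix.transpose_apply]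
  have key : ∀ (x u v : F), (∑ i, σ i u * σ i x * σ i v)
      = algebraMap ℚ ℝ (Algebra.trace ℚ F (x * u * v)) := by
    intro x u v
    rw [htr]
    refine Finset.sum_congr rfl fun i _ => ?_
    rw [_root_.map_mul, _root_.map_mul]; ring
  have hnmul : ∀ x : F, Algebra.trace ℚ F ((n : F) * x)
      = (n : ℚ) * Algebra.trace ℚ F x := by
    intro x
    have h3 : (n : F) * x = (n : ℚ) • x := by
      rw [Algebra.smul_def, map_natCast]
    rw [h3, _root_.map_smul, smul_eq_mul]
  intro i j
  rw [hprod]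
  cases i with
  | inl j' =>
    cases j with
    | inl k =>
      obtain ⟨m, hm⟩ := trZ (a₀ * e j') (ha₀.mul (hint j')) k
      refine ⟨m, ?_⟩
      have hA : (Rᵀ * (Matrix.diagonal fun i => σ i a) * R') j' k
          = algebraMap ℚ ℝ (Algebra.trace ℚ F (a * e j' * estar k)) := by
        rw [entry]; simp_rw [hR, hR']; exact key a (e j') (estar k)
      have hsplit : a * e j' * estar k
          = estar k * e j' + (n : F) * (a₀ * e j' * estar k) := by
        have ha' : a = 1 + (n : F) * a₀ := by linear_combination haeq
        rw [ha']; ring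
      have hTval : Algebra.trace ℚ F (a * e j' * estar k)
          = (if k = j' then 1 else 0) + (n : ℚ) * m := by
        rw [hsplit, map_add, hnmul, hm, hdual k j']
      rw [Matrix.sub_apply, Matrix.fromBlocks_apply₁₁, hA, hTval, Matrix.one_apply]
      by_cases h : j' = k
      · simp [h]
      · simp [h, Ne.symm h]
    | inr k =>
      obtain ⟨m, hm⟩ := hb₀ (e j' * e k) ((hint j').mul (hint k))
      refine ⟨m, ?_⟩
      have hA : (Rᵀ * (Matrix.diagonal fun i => σ i b) * R) j' k
          = algebraMap ℚ ℝ (Algebra.trace ℚ F (b * e j' * e k)) := by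
        rw [entry]; simp_rw [hR]; exact key b (e j') (e k)
      have hsplit : b * e j' * e k = (n : F) * (b₀ * (e j' * e k)) := by
        rw [hbeq]; ring
      rw [Matrix.sub_apply, Matrix.fromBlocks_apply₁₂, hA, hsplit, hnmul, hm]
      simp [Matrix.one_apply]
  | inr j' =>
    cases j with
    | inl k =>
      have hcint : IsIntegral ℤ (c₀ * estar j') := by
        apply hc₀
        intro y hy
        obtain ⟨m, hm⟩ := trZ y hy j'
        exact ⟨m, by rw [mul_comm]; exact hm⟩
      obtain ⟨m, hm⟩ := trZ (c₀ * estar j') hcint k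
      refine ⟨m, ?_⟩
      have hA : (R'ᵀ * (Matrix.diagonal fun i => σ i c) * R') j' k
          = algebraMap ℚ ℝ (Algebra.trace ℚ F (c * estar j' * estar k)) := by
        rw [entry]; simp_rw [hR']; exact key c (estar j') (estar k)
      have hsplit : c * estar j' * estar k = (n : F) * (c₀ * estar j' * estar k) := by
        rw [hceq]; ring
      rw [Matrix.sub_apply, Matrix.fromBlocks_apply₂₁, hA, hsplit, hnmul, hm]
      simp [Matrix.one_apply]
    | inr k =>
      obtain ⟨m, hm⟩ := trZ (d₀ * e k) (hd₀.mul (hint k)) j'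
      refine ⟨m, ?_⟩
      have hA : (R'ᵀ * (Matrix.diagonal fun i => σ i d) * R) j' k
          = algebraMap ℚ ℝ (Algebra.trace ℚ F (d * estar j' * e k)) := by
        rw [entry]; simp_rw [hR', hR]; exact key d (estar j') (e k)
      have hsplit : d * estar j' * e k
          = estar j' * e k + (n : F) * (d₀ * e k * estar j') := by
        have hd' : d = 1 + (n : F) * d₀ := by linear_combination hdeq
        rw [hd']; ring
      have hTval : Algebra.trace ℚ F (d * estar j' * e k)
          = (if j' = k then 1 else 0) + (n : ℚ) * m := by
        rw [hsplit, map_add, hnmul, hm, hdual j' k]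
      rw [Matrix.sub_apply, Matrix.fromBlocks_apply₂₂, hA, hTval, Matrix.one_apply]
      by_cases h : j' = k
      · simp [h]
      · simp [h]
end
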